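/- arXiv:1904.10703 — 13 statements merged into one kernel-verified Lean document; each statement's English description precedes it below -/
import Mathlib

section
/- In a WQO X, a nonempty downwards-closed subset D is down prime (i.e., D ⊆ D₁ ∪ D₂ for downwards-closed D₁, D₂ implies D ⊆ D₁ or D ⊆ D₂) if and only if D is an ideal (nonempty, downwards-closed, and directed). -/
def DownClosed {X : Type*} [Preorder X] (D : Set X) : Prop :=
  ∀ ⦃x y : X⦄, x ∈ D → y ≤ x → y ∈ D

def IsIdeal {X : Type*} [Preorder X] (I : Set X) : Prop :=
  I.Nonempty ∧ DownClosed I ∧ DirectedOn (· ≤ ·) I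

theorem downPrime_iff_ideal {X : Type*} [Preorder X]
    (hwqo : ∀ f : ℕ → X, ∃ i j : ℕ, i < j ∧ f i ≤ f j)
    (D : Set X) (hne : D.Nonempty) (hD : DownClosed D) :
    (∀ D₁ D₂ : Set X, DownClosed D₁ → DownClosed D₂ →
        D ⊆ D₁ ∪ D₂ → D ⊆ D₁ ∨ D ⊆ D₂) ↔ IsIdeal D := by
  constructor
  · intro hprime
    refine ⟨hne, hD, ?_⟩
    intro a ha b hb
    by_contra hcon
    push_neg at hcon
    have h1 : DownClosed {x : X | ¬ a ≤ x} := fun x y hx hyx hay => hx (hay.trans hyx)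
    have h2 : DownClosed {x : X | ¬ b ≤ x} := fun x y hx hyx hby => hx (hby.trans hyx)
    have hsub : D ⊆ {x : X | ¬ a ≤ x} ∪ {x : X | ¬ b ≤ x} := by
      intro x hx
      by_contra hx'
      simp only [Set.mem_union, Set.mem_setOf_eq, not_or, not_not] at hx'
      exact hcon x hx hx'.1 hx'.2
    rcases hprime _ _ h1 h2 hsub with h | h
    · exact h ha le_rfl
    · exact h hb le_rfl
  · rintro ⟨-, -, hdir⟩ D₁ D₂ h1 h2 hsub
    by_contra hcon
    push_neg at hcon
    obtain ⟨a, ha, ha1⟩ := Set.not_subset.mp hcon.1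
    obtain ⟨b, hb, hb2⟩ := Set.not_subset.mp hcon.2
    obtain ⟨c, hc, hac, hbc⟩ := hdir a ha b hb
    rcases hsub hc with h | h
    · exact ha1 (h1 h hac)
    · exact hb2 (h2 h hbc)
end

section
/- In a WQO X, a nonempty upwards-closed subset U is up prime (U ⊆ U₁ ∪ U₂ implies U ⊆ U₁ or U ⊆ U₂ for upwards-closed U₁,U₂) if and only if U is a principal filter ↑x for some x ∈ X. -/
def UpClosed {X : Type*} [Preorder X] (U : Set X) : Prop :=
  ∀ ⦃x y : X⦄, x ∈ U → x ≤ y → y ∈ U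

theorem upPrime_iff_principal {X : Type*} [Preorder X]
    (hwqo : ∀ f : ℕ → X, ∃ i j : ℕ, i < j ∧ f i ≤ f j)
    (U : Set X) (hne : U.Nonempty) (hU : UpClosed U) :
    (∀ U₁ U₂ : Set X, UpClosed U₁ → UpClosed U₂ →
        U ⊆ U₁ ∪ U₂ → U ⊆ U₁ ∨ U ⊆ U₂) ↔ ∃ x : X, U = {y : X | x ≤ y} := by
  constructor
  · intro hprime
    by_contra hnp
    push_neg at hnp
    have key : ∀ x, x ∈ U → ∃ z, z ∈ U ∧ z ≤ x ∧ ¬ x ≤ z := by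
      intro x hx
      have h1 : UpClosed {y : X | x ≤ y} := fun a b ha hab => le_trans ha hab
      have h2 : UpClosed {y : X | ∃ z ∈ U, ¬ x ≤ z ∧ z ≤ y} := by
        rintro a b ⟨z, hz, hxz, hza⟩ hab
        exact ⟨z, hz, hxz, hza.trans hab⟩
      have hsub : U ⊆ {y | x ≤ y} ∪ {y | ∃ z ∈ U, ¬ x ≤ z ∧ z ≤ y} := by
        intro y hy
        by_cases h : x ≤ y
        · exact Or.inl h
        · exact Or.inr ⟨y, hy, h, le_refl y⟩
      rcases hprime _ _ h1 h2 hsub with h | h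
      · exact absurd (Set.Subset.antisymm h (fun y hy => hU hx hy)) (hnp x)
      · rcases h hx with ⟨z, hz, hxz, hzx⟩
        exact ⟨z, hz, hzx, hxz⟩
    obtain ⟨x0, hx0⟩ := hne
    choose g hg1 hg2 hg3 using key
    let f : ℕ → {x : X // x ∈ U} := fun n =>
      Nat.rec ⟨x0, hx0⟩ (fun _ p => ⟨g p.1 p.2, hg1 p.1 p.2⟩) n
    have hstep : ∀ n, (f (n+1)).1 ≤ (f n).1 ∧ ¬ (f n).1 ≤ (f (n+1)).1 :=
      fun n => ⟨hg2 _ _, hg3 _ _⟩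
    have anti : ∀ i j, i ≤ j → (f j).1 ≤ (f i).1 := by
      intro i j hij
      induction j with
      | zero =>
        have : i = 0 := Nat.le_zero.mp hij
        subst this; exact le_refl _
      | succ n ih =>
        rcases Nat.lt_or_ge i (n+1) with h | h
        · exact le_trans (hstep n).1 (ih (Nat.lt_succ_iff.mp h))
        · have : i = n+1 := le_antisymm hij h
          subst this; exact le_refl _
    obtain ⟨i, j, hij, hle⟩ := hwqo (fun n => (f n).1)
    exact (hstep i).2 (le_trans hle (anti (i+1) j hij))
  · rintro ⟨x, rfl⟩ U₁ U₂ h1 h2 hsub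
    rcases hsub (le_refl x) with h | h
    · exact Or.inl (fun y hy => h1 h hy)
    · exact Or.inr (fun y hy => h2 h hy)
end

section
/- In a WQO X, every downwards-closed subset D is a finite union of ideals of X. -/
theorem downClosed_finite_union_of_ideals {X : Type*} [Preorder X]
    (hwqo : ∀ f : ℕ → X, ∃ i j : ℕ, i < j ∧ f i ≤ f j)
    (D : Set X) (hD : DownClosed D) :
    ∃ S : Finset (Set X), (∀ I ∈ S, IsIdeal I) ∧ D = ⋃ I ∈ S, I := by
  classical
  haveI : IsStrictOrder {A : Set X // DownClosed A}
      (fun A B : {A : Set X // DownClosed A} => A.1 ⊂ B.1) :=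
    { irrefl := fun A h => h.2 h.1, trans := fun _ _ _ h1 h2 => h1.trans h2 }
  have hwf : WellFounded (fun A B : {A : Set X // DownClosed A} => A.1 ⊂ B.1) := by
    rw [RelEmbedding.wellFounded_iff_isEmpty]
    constructor
    intro f
    have hdesc : ∀ n : ℕ, (f (n+1)).1 ⊂ (f n).1 := fun n =>
      f.map_rel_iff.2 (Nat.lt_succ_self n)
    have hmono : ∀ i j : ℕ, i ≤ j → (f j).1 ⊆ (f i).1 := by
      intro i j hij
      obtain ⟨k, rfl⟩ := Nat.exists_eq_add_of_le hij
      induction k with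
      | zero => exact fun x hx => hx
      | succ k ih =>
        exact fun x hx => ih (Nat.le_add_right i k) ((hdesc (i+k)).1 hx)
    have hx : ∀ n : ℕ, ∃ x, x ∈ (f n).1 ∧ x ∉ (f (n+1)).1 := by
      intro n
      rcases Set.exists_of_ssubset (hdesc n) with ⟨x, hx1, hx2⟩
      exact ⟨x, hx1, hx2⟩
    choose x hx1 hx2 using hx
    obtain ⟨i, j, hij, hle⟩ := hwqo x
    have : x j ∈ (f (i+1)).1 := hmono (i+1) j hij (hx1 j)
    exact hx2 i ((f (i+1)).2 this hle)
  suffices h : ∀ A : {A : Set X // DownClosed A},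
      ∃ S : Finset (Set X), (∀ I ∈ S, IsIdeal I) ∧ A.1 = ⋃ I ∈ S, I from
    h ⟨D, hD⟩
  intro A
  induction A using hwf.induction with
  | _ A ih =>
    by_cases hne : A.1.Nonempty
    · by_cases hdir : DirectedOn (· ≤ ·) A.1
      · exact ⟨{A.1}, by simpa using ⟨hne, A.2, hdir⟩, by simp⟩
      · rw [DirectedOn] at hdir
        push_neg at hdir
        obtain ⟨a, ha, b, hb, hab⟩ := hdir
        set A₁ : Set X := {x ∈ A.1 | ¬ a ≤ x} with hA₁
        set A₂ : Set X := {x ∈ A.1 | ¬ b ≤ x} with hA₂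
        have hd₁ : DownClosed A₁ := by
          intro x y hx hyx
          exact ⟨A.2 hx.1 hyx, fun h => hx.2 (h.trans hyx)⟩
        have hd₂ : DownClosed A₂ := by
          intro x y hx hyx
          exact ⟨A.2 hx.1 hyx, fun h => hx.2 (h.trans hyx)⟩
        have hs₁ : A₁ ⊂ A.1 := ⟨fun x hx => hx.1, fun h => (h ha).2 le_rfl⟩
        have hs₂ : A₂ ⊂ A.1 := ⟨fun x hx => hx.1, fun h => (h hb).2 le_rfl⟩
        obtain ⟨S₁, hS₁, hU₁⟩ := ih ⟨A₁, hd₁⟩ hs₁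
        obtain ⟨S₂, hS₂, hU₂⟩ := ih ⟨A₂, hd₂⟩ hs₂
        refine ⟨S₁ ∪ S₂, ?_, ?_⟩
        · intro I hI
          rcases Finset.mem_union.1 hI with h | h
          · exact hS₁ I h
          · exact hS₂ I h
        · have hcover : A.1 = A₁ ∪ A₂ := by
            ext x
            constructor
            · intro hx
              by_cases h1 : a ≤ x
              · by_cases h2 : b ≤ x
                · exact absurd h2 (hab x hx h1)
                · exact Or.inr ⟨hx, h2⟩
              · exact Or.inl ⟨hx, h1⟩
            · rintro (h | h) <;> exact h.1
          simp only [Subtype.coe_mk] at hU₁ hU₂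
          rw [hcover, show A₁ = ⋃ I ∈ S₁, I from hU₁, show A₂ = ⋃ I ∈ S₂, I from hU₂,
            Finset.set_biUnion_union]
    · refine ⟨∅, by simp, ?_⟩
      simp [Set.not_nonempty_iff_eq_empty.1 hne]
end

section
/- In a WQO X, every upwards-closed (resp. downwards-closed) subset has a unique minimal finite decomposition into up primes (resp. down primes): if ⋃_{i<n} Pᵢ = ⋃_{j<m} P'ⱼ are two decompositions into primes with no containments among distinct components of the same decomposition, then {P₁,...,Pₙ} = {P'₁,...,P'ₘ}. -/
def UpPrime {X : Type*} [Preorder X] (U : Set X) : Prop :=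
  U.Nonempty ∧ UpClosed U ∧
    ∀ U₁ U₂ : Set X, UpClosed U₁ → UpClosed U₂ → U ⊆ U₁ ∪ U₂ → U ⊆ U₁ ∨ U ⊆ U₂

def DownPrime {X : Type*} [Preorder X] (D : Set X) : Prop :=
  D.Nonempty ∧ DownClosed D ∧
    ∀ D₁ D₂ : Set X, DownClosed D₁ → DownClosed D₂ → D ⊆ D₁ ∪ D₂ → D ⊆ D₁ ∨ D ⊆ D₂

lemma prime_sub_finite_union {X : Type*} (C : Set X → Prop)
    (hsU : ∀ S : Set (Set X), (∀ s ∈ S, C s) → C (⋃₀ S))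
    (p : Set X)
    (hp : p.Nonempty ∧ C p ∧
      ∀ U₁ U₂ : Set X, C U₁ → C U₂ → p ⊆ U₁ ∪ U₂ → p ⊆ U₁ ∨ p ⊆ U₂)
    (Q : Finset (Set X)) (hQ : ∀ q ∈ Q, C q)
    (hsub : p ⊆ ⋃₀ (↑Q : Set (Set X))) : ∃ q ∈ Q, p ⊆ q := by
  classical
  induction Q using Finset.induction with
  | empty =>
    simp only [Finset.coe_empty, Set.sUnion_empty, Set.subset_empty_iff] at hsub
    exact absurd hp.1 (by simp [hsub])
  | @insert a s _ ih =>
    have hsub' : p ⊆ a ∪ ⋃₀ (↑s : Set (Set X)) := by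
      simpa [Set.sUnion_insert] using hsub
    have hCa : C a := hQ _ (Finset.mem_insert_self _ _)
    have hCs : C (⋃₀ (↑s : Set (Set X))) :=
      hsU _ (fun t ht => hQ t (Finset.mem_insert_of_mem ht))
    rcases hp.2.2 _ _ hCa hCs hsub' with h | h
    · exact ⟨a, Finset.mem_insert_self _ _, h⟩
    · obtain ⟨r, hr, hpr⟩ := ih (fun t ht => hQ t (Finset.mem_insert_of_mem ht)) h
      exact ⟨r, Finset.mem_insert_of_mem hr, hpr⟩

lemma decomp_subset {X : Type*} (C : Set X → Prop)
    (hsU : ∀ S : Set (Set X), (∀ s ∈ S, C s) → C (⋃₀ S))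
    (P P' : Finset (Set X))
    (hP : ∀ p ∈ P, p.Nonempty ∧ C p ∧
      ∀ U₁ U₂ : Set X, C U₁ → C U₂ → p ⊆ U₁ ∪ U₂ → p ⊆ U₁ ∨ p ⊆ U₂)
    (hP' : ∀ p ∈ P', p.Nonempty ∧ C p ∧
      ∀ U₁ U₂ : Set X, C U₁ → C U₂ → p ⊆ U₁ ∪ U₂ → p ⊆ U₁ ∨ p ⊆ U₂)
    (hmin : ∀ p ∈ P, ∀ q ∈ P, p ⊆ q → p = q)
    (heq : ⋃₀ (↑P : Set (Set X)) = ⋃₀ (↑P' : Set (Set X))) : P ⊆ P' := by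
  intro p hpP
  obtain ⟨q, hqP', hpq⟩ := prime_sub_finite_union C hsU p (hP p hpP) P'
    (fun s hs => (hP' s hs).2.1)
    (heq ▸ (Set.subset_sUnion_of_mem (by exact_mod_cast hpP)))
  obtain ⟨r, hrP, hqr⟩ := prime_sub_finite_union C hsU q (hP' q hqP') P
    (fun s hs => (hP s hs).2.1)
    (heq ▸ (Set.subset_sUnion_of_mem (by exact_mod_cast hqP')))
  have : p = r := hmin p hpP r hrP (hpq.trans hqr)
  have hpq' : p = q := le_antisymm hpq (this ▸ hqr)
  exact hpq' ▸ hqP'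

theorem canonical_decomposition_unique {X : Type*} [Preorder X]
    (hwqo : ∀ f : ℕ → X, ∃ i j : ℕ, i < j ∧ f i ≤ f j) :
    (∀ P P' : Finset (Set X),
      (∀ p ∈ P, UpPrime p) → (∀ p ∈ P', UpPrime p) →
      (∀ p ∈ P, ∀ q ∈ P, p ⊆ q → p = q) →
      (∀ p ∈ P', ∀ q ∈ P', p ⊆ q → p = q) →
      ⋃₀ (↑P : Set (Set X)) = ⋃₀ (↑P' : Set (Set X)) → P = P') ∧
    (∀ P P' : Finset (Set X),
      (∀ p ∈ P, DownPrime p) → (∀ p ∈ P', DownPrime p) →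
      (∀ p ∈ P, ∀ q ∈ P, p ⊆ q → p = q) →
      (∀ p ∈ P', ∀ q ∈ P', p ⊆ q → p = q) →
      ⋃₀ (↑P : Set (Set X)) = ⋃₀ (↑P' : Set (Set X)) → P = P') := by
  have hU : ∀ S : Set (Set X), (∀ s ∈ S, UpClosed s) → UpClosed (⋃₀ S) := by
    intro S hS x y hx hxy
    obtain ⟨s, hs, hxs⟩ := hx
    exact ⟨s, hs, hS s hs hxs hxy⟩
  have hD : ∀ S : Set (Set X), (∀ s ∈ S, DownClosed s) → DownClosed (⋃₀ S) := by
    intro S hS x y hx hxy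
    obtain ⟨s, hs, hxs⟩ := hx
    exact ⟨s, hs, hS s hs hxs hxy⟩
  constructor
  · intro P P' h1 h2 h3 h4 heq
    exact Finset.Subset.antisymm
      (decomp_subset UpClosed hU P P' h1 h2 h3 heq)
      (decomp_subset UpClosed hU P' P h2 h1 h4 heq.symm)
  · intro P P' h1 h2 h3 h4 heq
    exact Finset.Subset.antisymm
      (decomp_subset DownClosed hD P P' h1 h2 h3 heq)
      (decomp_subset DownClosed hD P' P h2 h1 h4 heq.symm)
end

section
/- Let X be a WQO and consider X* with Higman's subsequence embedding ordering ≤*. For any downwards-closed sets D₁, D₂, D ⊆ X*, one has (D₁ ∩ D₂)·D = (D₁·D) ∩ (D₂·D), where · denotes concatenation of sets of sequences. -/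
/-- Higman's subsequence embedding ordering on finite sequences. -/
def Hig {X : Type*} [Preorder X] : List X → List X → Prop :=
  List.SublistForall₂ (· ≤ ·)

def DCSeq {X : Type*} [Preorder X] (D : Set (List X)) : Prop :=
  ∀ ⦃u v : List X⦄, u ∈ D → Hig v u → v ∈ D

def conc {X : Type*} (U V : Set (List X)) : Set (List X) :=
  {w | ∃ u ∈ U, ∃ v ∈ V, w = u ++ v}

theorem concat_distrib_inter {X : Type*} [Preorder X]
    (hwqo : ∀ f : ℕ → X, ∃ i j : ℕ, i < j ∧ f i ≤ f j)
    (D₁ D₂ D : Set (List X)) (h₁ : DCSeq D₁) (h₂ : DCSeq D₂) (h : DCSeq D) :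
    conc (D₁ ∩ D₂) D = conc D₁ D ∩ conc D₂ D := by
  have hpre : ∀ (u t : List X), Hig u (u ++ t) := fun u t => by
    rw [Hig, List.sublistForall₂_iff]
    exact ⟨u, List.forall₂_refl u, List.sublist_append_left u t⟩
  have hsuf : ∀ (t v : List X), Hig v (t ++ v) := fun t v => by
    rw [Hig, List.sublistForall₂_iff]
    exact ⟨v, List.forall₂_refl v, List.sublist_append_right t v⟩
  ext w
  constructor
  · rintro ⟨u, ⟨hu1, hu2⟩, v, hv, rfl⟩
    exact ⟨⟨u, hu1, v, hv, rfl⟩, ⟨u, hu2, v, hv, rfl⟩⟩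
  · rintro ⟨⟨u₁, hu₁, v₁, hv₁, rfl⟩, ⟨u₂, hu₂, v₂, hv₂, heq⟩⟩
    rcases List.append_eq_append_iff.mp heq with ⟨t, rfl, rfl⟩ | ⟨t, rfl, rfl⟩
    · exact ⟨u₁, ⟨hu₁, h₂ hu₂ (hpre u₁ t)⟩, t ++ v₂, hv₁, rfl⟩
    · exact ⟨u₂, ⟨h₁ hu₁ (hpre u₂ t), hu₂⟩, t ++ v₁, hv₂, by rw [List.append_assoc]⟩
end

section
/- Let X be a WQO and D ⊆ X be downwards-closed. Then D* = {sequences all of whose elements are in D} is an ideal of (X*, ≤*); and for any ideal I of X, the set I+ε = {ε} ∪ {one-element sequences ⟨x⟩ with x ∈ I} is an ideal of (X*, ≤*); and the concatenation of two ideals of (X*, ≤*) is an ideal of (X*, ≤*). -/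
def IsIdealSeq {X : Type*} [Preorder X] (I : Set (List X)) : Prop :=
  I.Nonempty ∧ DCSeq I ∧ DirectedOn Hig I

def star {X : Type*} (D : Set X) : Set (List X) := {l | ∀ x ∈ l, x ∈ D}

def plusEps {X : Type*} (I : Set X) : Set (List X) :=
  {[]} ∪ {l | ∃ x ∈ I, l = [x]}

namespace HigAux

variable {X : Type*} [Preorder X]

lemma hig_refl (l : List X) : Hig l l := by
  induction l with
  | nil => exact List.SublistForall₂.nil
  | cons a t ih => exact List.SublistForall₂.cons le_rfl ih

lemma hig_nil (l : List X) : Hig [] l := List.SublistForall₂.nil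

lemma hig_append_left {b d : List X} (c : List X) (h2 : Hig b d) : Hig b (c ++ d) := by
  induction c with
  | nil => exact h2
  | cons x t ih => exact List.SublistForall₂.cons_right ih

lemma hig_append {a b c d : List X} (h1 : Hig a c) (h2 : Hig b d) :
    Hig (a ++ b) (c ++ d) := by
  induction h1 with
  | nil => exact hig_append_left _ h2
  | cons hr _ ih => exact List.SublistForall₂.cons hr ih
  | cons_right _ ih => exact List.SublistForall₂.cons_right ih

lemma hig_split {w u v : List X} (h : Hig w (u ++ v)) :
    ∃ w1 w2, w = w1 ++ w2 ∧ Hig w1 u ∧ Hig w2 v := by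
  induction u generalizing w with
  | nil => exact ⟨[], w, rfl, hig_nil _, h⟩
  | cons b u' ih =>
    cases h with
    | nil => exact ⟨[], [], rfl, hig_nil _, hig_nil _⟩
    | @cons a _ _ _ hr htl =>
        obtain ⟨w1, w2, rfl, h1, h2⟩ := ih htl
        exact ⟨a :: w1, w2, rfl, List.SublistForall₂.cons hr h1, h2⟩
    | cons_right htl =>
        obtain ⟨w1, w2, rfl, h1, h2⟩ := ih htl
        exact ⟨w1, w2, rfl, List.SublistForall₂.cons_right h1, h2⟩

end HigAux

theorem atoms_and_products_are_ideals {X : Type*} [Preorder X]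
    (hwqo : ∀ f : ℕ → X, ∃ i j : ℕ, i < j ∧ f i ≤ f j) :
    (∀ D : Set X, DownClosed D → IsIdealSeq (star D)) ∧
    (∀ I : Set X, IsIdeal I → IsIdealSeq (plusEps I)) ∧
    (∀ P Q : Set (List X), IsIdealSeq P → IsIdealSeq Q → IsIdealSeq (conc P Q)) := by

  open HigAux in
  refine ⟨?_, ?_, ?_⟩
  · intro D hD
    refine ⟨⟨[], by intro x hx; simp at hx⟩, ?_, ?_⟩
    · intro u v hu hvu
      intro x hx
      -- every element of v is ≤ some element of u
      have : ∃ y ∈ u, x ≤ y := by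
        induction hvu with
        | nil => simp at hx
        | @cons a b l1 l2 hr htl ih =>
            rcases List.mem_cons.1 hx with rfl | hx
            · exact ⟨b, List.mem_cons_self, hr⟩
            · obtain ⟨y, hy, hxy⟩ := ih (fun z hz => hu z (List.mem_cons_of_mem _ hz)) hx
              exact ⟨y, List.mem_cons_of_mem _ hy, hxy⟩
        | @cons_right l1 b l2 htl ih =>
            obtain ⟨y, hy, hxy⟩ := ih (fun z hz => hu z (List.mem_cons_of_mem _ hz)) hx
            exact ⟨y, List.mem_cons_of_mem _ hy, hxy⟩
      obtain ⟨y, hy, hxy⟩ := this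
      exact hD (hu y hy) hxy
    · intro u hu v hv
      refine ⟨u ++ v, ?_, ?_, ?_⟩
      · intro x hx
        rcases List.mem_append.1 hx with h | h
        · exact hu x h
        · exact hv x h
      · have := hig_append (hig_refl u) (hig_nil (l := v))
        simpa using this
      · have := hig_append (hig_nil (l := u)) (hig_refl v)
        simpa using this
  · intro I ⟨⟨x0, hx0⟩, hdc, hdir⟩
    refine ⟨⟨[], Or.inl rfl⟩, ?_, ?_⟩
    · rintro u v hu hvu
      rcases hu with rfl | ⟨x, hx, rfl⟩
      · cases hvu; exact Or.inl rfl
      · cases hvu with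
        | nil => exact Or.inl rfl
        | cons hr htl =>
            cases htl
            exact Or.inr ⟨_, hdc hx hr, rfl⟩
        | cons_right htl => cases htl; exact Or.inl rfl
    · rintro u hu v hv
      rcases hu with rfl | ⟨x, hx, rfl⟩
      · exact ⟨v, hv, hig_nil _, hig_refl _⟩
      rcases hv with rfl | ⟨y, hy, rfl⟩
      · exact ⟨[x], Or.inr ⟨x, hx, rfl⟩, hig_refl _, hig_nil _⟩
      obtain ⟨z, hz, hxz, hyz⟩ := hdir x hx y hy
      exact ⟨[z], Or.inr ⟨z, hz, rfl⟩,
        List.SublistForall₂.cons hxz List.SublistForall₂.nil,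
        List.SublistForall₂.cons hyz List.SublistForall₂.nil⟩
  · rintro P Q ⟨⟨p0, hp0⟩, hPdc, hPdir⟩ ⟨⟨q0, hq0⟩, hQdc, hQdir⟩
    refine ⟨⟨p0 ++ q0, p0, hp0, q0, hq0, rfl⟩, ?_, ?_⟩
    · rintro w v ⟨u1, hu1, u2, hu2, rfl⟩ hvw
      obtain ⟨w1, w2, rfl, h1, h2⟩ := hig_split hvw
      exact ⟨w1, hPdc hu1 h1, w2, hQdc hu2 h2, rfl⟩
    · rintro w ⟨u1, hu1, u2, hu2, rfl⟩ w' ⟨v1, hv1, v2, hv2, rfl⟩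
      obtain ⟨a, ha, hu1a, hv1a⟩ := hPdir u1 hu1 v1 hv1
      obtain ⟨b, hb, hu2b, hv2b⟩ := hQdir u2 hu2 v2 hv2
      exact ⟨a ++ b, ⟨a, ha, b, hb, rfl⟩, hig_append hu1a hu2b, hig_append hv1a hv2b⟩
end

section
/- Let X be a WQO and x ∈ X, v ∈ X* nonempty. Then the complement of the filter ↑(x·v) in (X*, ≤*) equals (X \ ↑x)* · (X + ε) · (X* \ ↑v), where (X \ ↑x)* denotes sequences with all elements not above x and X + ε denotes sequences of length at most 1. Moreover X* \ ↑⟨x⟩ = (X \ ↑x)*. -/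
private lemma hig_drop_head {X : Type*} [Preorder X] {z : X} {l c : List X}
    (h : Hig (z :: l) c) : Hig l c := by
  induction c with
  | nil => cases h
  | cons y c ih =>
    cases h with
    | cons hzy htl => exact List.SublistForall₂.cons_right htl
    | cons_right htl => exact List.SublistForall₂.cons_right (ih htl)

private lemma hig_of_prefix {X : Type*} [Preorder X] {x : X} {v : List X} :
    ∀ (a w : List X), Hig (x :: v) (a ++ w) → (∀ y ∈ a, ¬ x ≤ y) →
      Hig (x :: v) w := by
  intro a
  induction a with
  | nil => intro w h _; exact h
  | cons y a ih =>
    intro w h ha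
    cases h with
    | cons hxy _ => exact absurd hxy (ha y (by simp))
    | cons_right htl => exact ih w htl (fun z hz => ha z (by simp [hz]))

private lemma not_hig_nil {X : Type*} [Preorder X] {v : List X} (hv : v ≠ []) :
    ¬ Hig v [] := by
  intro h
  cases h
  exact hv rfl

theorem complement_of_filter_seq {X : Type*} [Preorder X]
    (hwqo : ∀ f : ℕ → X, ∃ i j : ℕ, i < j ∧ f i ≤ f j)
    (x : X) (v : List X) :
    ({u : List X | ¬ Hig [x] u} = star {y : X | ¬ x ≤ y}) ∧
    (v ≠ [] →
      {u : List X | ¬ Hig (x :: v) u} =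
        conc (star {y : X | ¬ x ≤ y})
          (conc {l : List X | l.length ≤ 1} {u : List X | ¬ Hig v u})) := by
  constructor
  · ext u
    show ¬ Hig [x] u ↔ ∀ y ∈ u, ¬ x ≤ y
    constructor
    · intro h y hy hxy
      apply h
      clear h
      induction u with
      | nil => cases hy
      | cons z u ih =>
        rcases List.mem_cons.mp hy with rfl | hy
        · exact List.SublistForall₂.cons hxy (List.SublistForall₂.nil)
        · exact List.SublistForall₂.cons_right (ih hy)
    · intro h hhig
      induction u with
      | nil => cases hhig
      | cons z u ih =>
        cases hhig with
        | cons hxz _ => exact h z List.mem_cons_self hxz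
        | cons_right htl => exact ih (fun y hy => h y (List.mem_cons_of_mem z hy)) htl
  · intro hv
    ext u
    show ¬ Hig (x :: v) u ↔ _
    constructor
    · intro h
      induction u with
      | nil =>
        exact ⟨[], fun y hy => absurd hy List.not_mem_nil,
          [], ⟨[], Nat.zero_le 1, [], not_hig_nil hv, rfl⟩, rfl⟩
      | cons y u ih =>
        by_cases hxy : x ≤ y
        · refine ⟨[], fun z hz => absurd hz List.not_mem_nil,
            [y] ++ u, ⟨[y], le_refl 1, u, ?_, rfl⟩, rfl⟩
          intro hvu
          exact h (List.SublistForall₂.cons hxy hvu)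
        · obtain ⟨a, ha, w, hw, hu⟩ :=
            ih (fun hh => h (List.SublistForall₂.cons_right hh))
          refine ⟨y :: a, ?_, w, hw, by rw [hu]; rfl⟩
          intro z hz
          rcases List.mem_cons.mp hz with rfl | hz
          · exact hxy
          · exact ha z hz
    · rintro ⟨a, ha, w, ⟨b, hb, c, hc, rfl⟩, rfl⟩ hhig
      have h2 : Hig (x :: v) (b ++ c) :=
        hig_of_prefix a (b ++ c) hhig (fun y hy hxy => ha y hy hxy)
      match b, hb with
      | [], _ => exact hc (hig_drop_head h2)
      | [y], _ =>
        cases h2 with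
        | cons _ htl => exact hc htl
        | cons_right htl => exact hc (hig_drop_head htl)
end

section
/- Let X be a WQO and v, w ∈ X*, a, b ∈ X. Then in (X*, ≤*): ↑(v·a) ⊙ ↑(b·w) = ↑(v·a·b·w) ∪ (↑v)·(↑_X a ∩ ↑_X b)·(↑w), where S ⊙ T := complement of (complement(S) · complement(T)), and (↑_X a ∩ ↑_X b) is identified with the set of length-1 sequences whose letter is above both a and b. -/
def upSeq {X : Type*} [Preorder X] (u : List X) : Set (List X) := {w | Hig u w}

/-- `S ⊙ T = ¬(¬S · ¬T)`. -/
def odot {X : Type*} (S T : Set (List X)) : Set (List X) :=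
  (conc Sᶜ Tᶜ)ᶜ

section aux

variable {X : Type*} [Preorder X]

lemma hig_of_sublist {x l l' : List X} (h : Hig x l) (hs : l.Sublist l') : Hig x l' := by
  rw [Hig, List.sublistForall₂_iff] at h ⊢
  obtain ⟨m, hm, hms⟩ := h
  exact ⟨m, hm, hms.trans hs⟩

lemma hig_append {x y l₁ l₂ : List X} (h₁ : Hig x l₁) (h₂ : Hig y l₂) :
    Hig (x ++ y) (l₁ ++ l₂) := by
  rw [Hig, List.sublistForall₂_iff] at h₁ h₂ ⊢
  obtain ⟨m₁, hm₁, hs₁⟩ := h₁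
  obtain ⟨m₂, hm₂, hs₂⟩ := h₂
  exact ⟨m₁ ++ m₂, List.rel_append hm₁ hm₂, hs₁.append hs₂⟩

lemma forall₂_append_split {R : X → X → Prop} :
    ∀ {x y m : List X}, List.Forall₂ R (x ++ y) m →
      ∃ m₁ m₂, m = m₁ ++ m₂ ∧ List.Forall₂ R x m₁ ∧ List.Forall₂ R y m₂ := by
  intro x
  induction x with
  | nil => intro y m h; exact ⟨[], m, rfl, List.Forall₂.nil, h⟩
  | cons a x ih =>
    intro y m h
    cases h with
    | cons hab htl =>
      rename_i b m'
      obtain ⟨m₁, m₂, rfl, h₁, h₂⟩ := ih htl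
      exact ⟨b :: m₁, m₂, rfl, List.Forall₂.cons hab h₁, h₂⟩

lemma hig_append_split {x y l : List X} (h : Hig (x ++ y) l) :
    ∃ l₁ l₂, l = l₁ ++ l₂ ∧ Hig x l₁ ∧ Hig y l₂ := by
  rw [Hig, List.sublistForall₂_iff] at h
  obtain ⟨m, hm, hs⟩ := h
  obtain ⟨m₁, m₂, rfl, h₁, h₂⟩ := forall₂_append_split hm
  obtain ⟨l₁, l₂, rfl, hs₁, hs₂⟩ := List.append_sublist_iff.mp hs
  exact ⟨l₁, l₂, rfl, List.sublistForall₂_iff.mpr ⟨m₁, h₁, hs₁⟩,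
    List.sublistForall₂_iff.mpr ⟨m₂, h₂, hs₂⟩⟩

lemma hig_singleton_iff {a : X} {l : List X} : Hig [a] l ↔ ∃ c ∈ l, a ≤ c := by
  rw [Hig, List.sublistForall₂_iff]
  constructor
  · rintro ⟨m, hm, hs⟩
    cases hm with
    | cons hac hnil =>
      rename_i c m'
      cases hnil
      exact ⟨c, List.singleton_sublist.mp hs, hac⟩
  · rintro ⟨c, hc, hac⟩
    exact ⟨[c], List.Forall₂.cons hac List.Forall₂.nil, List.singleton_sublist.mpr hc⟩

lemma not_hig_cons_nil {a : X} {l : List X} : ¬ Hig (a :: l) [] := by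
  intro h; cases h

lemma not_hig_append_singleton_nil {a : X} {l : List X} : ¬ Hig (l ++ [a]) [] := by
  intro h
  rw [Hig, List.sublistForall₂_iff] at h
  obtain ⟨m, hm, hs⟩ := h
  rcases List.sublist_nil.mp hs
  have := List.Forall₂.length_eq hm
  simp at this

end aux

theorem odot_of_filters {X : Type*} [Preorder X]
    (hwqo : ∀ f : ℕ → X, ∃ i j : ℕ, i < j ∧ f i ≤ f j)
    (v w : List X) (a b : X) :
    odot (upSeq (v ++ [a])) (upSeq (b :: w)) =
      upSeq (v ++ [a, b] ++ w) ∪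
        conc (upSeq v) (conc {l : List X | ∃ c : X, a ≤ c ∧ b ≤ c ∧ l = [c]} (upSeq w)) := by
  ext u
  simp only [odot, conc, upSeq, Set.mem_compl_iff, Set.mem_setOf_eq, Set.mem_union]
  constructor
  · intro h
    have H : ∀ u₁ u₂ : List X, u = u₁ ++ u₂ → Hig (v ++ [a]) u₁ ∨ Hig (b :: w) u₂ := by
      intro u₁ u₂ he
      by_contra hc
      push_neg at hc
      exact h ⟨u₁, hc.1, u₂, hc.2, he⟩
    clear h
    classical
    have hPlen : Hig (v ++ [a]) (u.take u.length) := by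
      rcases H (u.take u.length) (u.drop u.length) (by simp) with h1 | h2
      · exact h1
      · simp only [List.drop_length] at h2
        exact absurd h2 not_hig_cons_nil
    have hex : ∃ k, Hig (v ++ [a]) (u.take k) := ⟨u.length, hPlen⟩
    set k₀ := Nat.find hex with hk₀def
    have hk₀ : Hig (v ++ [a]) (u.take k₀) := Nat.find_spec hex
    have hk₀pos : 0 < k₀ := by
      rcases Nat.eq_zero_or_pos k₀ with h0 | h0
      · rw [h0] at hk₀
        simp only [List.take_zero] at hk₀
        exact absurd hk₀ not_hig_append_singleton_nil
      · exact h0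
    have hk₀len : k₀ ≤ u.length := Nat.find_min' hex hPlen
    have hc : k₀ - 1 < u.length := by omega
    set p := u.take (k₀ - 1) with hp
    set c := u[k₀ - 1] with hcdef
    set q := u.drop k₀ with hq
    have htake : u.take k₀ = p ++ [c] := by
      have : k₀ = (k₀ - 1) + 1 := by omega
      rw [this, List.take_succ, List.getElem?_eq_getElem hc]
      rfl
    have hmin : ¬ Hig (v ++ [a]) p := Nat.find_min hex (by omega)
    rw [htake] at hk₀
    -- hk₀ : Hig (v ++ [a]) (p ++ [c])
    have key : Hig v p ∧ a ≤ c := by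
      obtain ⟨z₁, z₂, heq, hz₁, hz₂⟩ := hig_append_split hk₀
      obtain ⟨d, hd, had⟩ := hig_singleton_iff.mp hz₂
      rcases List.append_eq_append_iff.mp heq with ⟨a', ha1, ha2⟩ | ⟨c', hc1, hc2⟩
      · cases a' with
        | nil =>
          simp only [List.nil_append] at ha2
          simp only [List.append_nil] at ha1
          subst ha2
          rcases List.mem_singleton.mp hd with rfl
          exact ⟨ha1 ▸ hz₁, had⟩
        | cons x xs =>
          simp only [List.cons_append, List.cons.injEq] at ha2
          have : z₂ = [] := by
            have := ha2.2
            exact (List.append_eq_nil_iff.mp this.symm).2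
          subst this
          simp at hd
      · subst hc2
        rcases List.mem_append.mp hd with hd' | hd'
        · exfalso
          apply hmin
          have : Hig [a] c' := hig_singleton_iff.mpr ⟨d, hd', had⟩
          have h2 := hig_append hz₁ this
          rwa [← hc1] at h2
        · rcases List.mem_singleton.mp hd' with rfl
          refine ⟨?_, had⟩
          exact hc1 ▸ hig_of_sublist hz₁ (List.sublist_append_left z₁ c')
    obtain ⟨hvp, hac⟩ := key
    have hu : u = p ++ c :: q := by
      conv_lhs => rw [← List.take_append_drop (k₀ - 1) u]
      rw [List.drop_eq_getElem_cons hc]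
      have e : k₀ - 1 + 1 = k₀ := by omega
      rw [e]
    rcases H p (c :: q) hu with h' | h'
    · exact absurd h' hmin
    · cases h' with
      | cons hbc hw =>
        right
        exact ⟨p, hvp, c :: q, ⟨[c], ⟨c, hac, hbc, rfl⟩, q, hw, rfl⟩, hu⟩
      | cons_right hw =>
        left
        have h2 := hig_append hk₀ hw
        have e1 : (v ++ [a]) ++ (b :: w) = v ++ [a, b] ++ w := by simp
        have e2 : (p ++ [c]) ++ q = u := by rw [hu]; simp
        rwa [e1, e2] at h2
  · rintro h ⟨u₁, hn1, u₂, hn2, hsplit⟩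
    rcases h with h | ⟨p, hvp, u₂', ⟨l1, ⟨c, hac, hbc, rfl⟩, q, hwq, rfl⟩, hu⟩
    · have e1 : v ++ [a, b] ++ w = (v ++ [a]) ++ (b :: w) := by simp
      rw [e1] at h
      obtain ⟨z₁, z₂, hz, h1, h2⟩ := hig_append_split h
      have heq : u₁ ++ u₂ = z₁ ++ z₂ := by rw [← hsplit, ← hz]
      rcases List.append_eq_append_iff.mp heq with ⟨a', ha1, ha2⟩ | ⟨c', hc1, hc2⟩
      · exact hn2 (hig_of_sublist h2 (ha2 ▸ List.sublist_append_right a' z₂))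
      · exact hn1 (hig_of_sublist h1 (hc1 ▸ List.sublist_append_left z₁ c'))
    · have hbcq : Hig (b :: w) ([c] ++ q) := List.SublistForall₂.cons hbc hwq
      have heq : u₁ ++ u₂ = p ++ ([c] ++ q) := by rw [← hsplit, hu]
      rcases List.append_eq_append_iff.mp heq with ⟨a', ha1, ha2⟩ | ⟨c', hc1, hc2⟩
      · exact hn2 (hig_of_sublist hbcq (ha2 ▸ List.sublist_append_right a' _))
      · cases c' with
        | nil =>
          simp only [List.nil_append] at hc2
          exact hn2 (hc2 ▸ hbcq)
        | cons x xs =>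
          simp only [List.cons_append, List.cons.injEq] at hc2
          obtain ⟨rfl, hq2⟩ := hc2
          apply hn1
          have hpc : Hig (v ++ [a]) (p ++ [c]) :=
            hig_append hvp (hig_singleton_iff.mpr ⟨c, List.mem_singleton_self c, hac⟩)
          refine hig_of_sublist hpc ?_
          rw [hc1]
          exact (List.Sublist.refl p).append ((List.nil_sublist xs).cons₂ c)
end

section
/- Let X be a WQO and D₁, D₂ ⊆ X downwards-closed, and P, Q downwards-closed subsets of X*. Then D₁*·P ∩ D₂*·Q = (D₁∩D₂)* · [ ((D₁*·P) ∩ Q) ∪ (P ∩ (D₂*·Q)) ] in (X*, ≤*). -/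
theorem inter_star_products {X : Type*} [Preorder X]
    (hwqo : ∀ f : ℕ → X, ∃ i j : ℕ, i < j ∧ f i ≤ f j)
    (D₁ D₂ : Set X) (hD₁ : DownClosed D₁) (hD₂ : DownClosed D₂)
    (P Q : Set (List X)) (hP : DCSeq P) (hQ : DCSeq Q) :
    conc (star D₁) P ∩ conc (star D₂) Q =
      conc (star (D₁ ∩ D₂)) ((conc (star D₁) P ∩ Q) ∪ (P ∩ conc (star D₂) Q)) := by
  ext w
  constructor
  · rintro ⟨⟨u₁, hu₁, p, hp, rfl⟩, u₂, hu₂, q, hq, hw⟩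
    rcases List.append_eq_append_iff.mp hw with ⟨m, hm1, hm2⟩ | ⟨m, hm1, hm2⟩
    · -- u₂ = u₁ ++ m, p = m ++ q
      refine ⟨u₁, fun x hx => ⟨hu₁ x hx, hu₂ x (by rw [hm1]; exact List.mem_append_left _ hx)⟩,
        p, Or.inr ⟨hp, ⟨m, fun x hx => hu₂ x (by rw [hm1]; exact List.mem_append_right _ hx),
          q, hq, hm2⟩⟩, rfl⟩
    · -- u₁ = u₂ ++ m, q = m ++ p
      refine ⟨u₂, fun x hx => ⟨hu₁ x (by rw [hm1]; exact List.mem_append_left _ hx),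
        hu₂ x hx⟩, q, Or.inl ⟨⟨m, fun x hx => hu₁ x (by rw [hm1]; exact List.mem_append_right _ hx),
          p, hp, hm2⟩, hq⟩, hw⟩
  · rintro ⟨u, hu, v, hv | hv, rfl⟩
    · obtain ⟨⟨a, ha, p, hp, rfl⟩, hvQ⟩ := hv
      exact ⟨⟨u ++ a, fun x hx => (List.mem_append.mp hx).elim
          (fun h => (hu x h).1) (fun h => ha x h), p, hp, by simp⟩,
        u, fun x hx => (hu x hx).2, a ++ p, hvQ, rfl⟩
    · obtain ⟨hvP, b, hb, q, hq, rfl⟩ := hv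
      exact ⟨⟨u, fun x hx => (hu x hx).1, b ++ q, hvP, rfl⟩,
        ⟨u ++ b, fun x hx => (List.mem_append.mp hx).elim
          (fun h => (hu x h).2) (fun h => hb x h), q, hq, by simp⟩⟩
end

section
/- Let X be a WQO. The ideals of the finitary powerset Pf(X) under the Hoare (domination) quasi-ordering are exactly the sets of the form Pf(D) = {finite subsets of D} for D ⊆ X downwards-closed. -/
/-- Hoare (domination) quasi-ordering on finite sets. -/
def hoare {X : Type*} [Preorder X] (S T : Finset X) : Prop :=
  ∀ x ∈ S, ∃ y ∈ T, x ≤ y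

def IsIdealHoare {X : Type*} [Preorder X] (𝒥 : Set (Finset X)) : Prop :=
  𝒥.Nonempty ∧ (∀ ⦃S T : Finset X⦄, S ∈ 𝒥 → hoare T S → T ∈ 𝒥) ∧
    DirectedOn hoare 𝒥

theorem ideals_of_finitary_powerset {X : Type*} [Preorder X]
    (hwqo : ∀ f : ℕ → X, ∃ i j : ℕ, i < j ∧ f i ≤ f j)
    (𝒥 : Set (Finset X)) :
    IsIdealHoare 𝒥 ↔ ∃ D : Set X, DownClosed D ∧ 𝒥 = {S : Finset X | ↑S ⊆ D} := by
  classical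
  constructor
  · rintro ⟨⟨S₀, hS₀⟩, hdown, hdir⟩
    refine ⟨{x | ∃ S ∈ 𝒥, ∃ y ∈ S, x ≤ y}, ?_, ?_⟩
    · rintro x y ⟨S, hS, z, hz, hxz⟩ hyx
      exact ⟨S, hS, z, hz, hyx.trans hxz⟩
    · ext S
      simp only [Set.mem_setOf_eq]
      constructor
      · intro hS x hx
        exact ⟨S, hS, x, hx, le_refl x⟩
      · intro hsub
        -- find T ∈ 𝒥 with hoare S T, by induction on S
        suffices h : ∃ T ∈ 𝒥, hoare S T by
          obtain ⟨T, hT, hST⟩ := h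
          exact hdown hT hST
        induction S using Finset.induction with
        | empty => exact ⟨S₀, hS₀, fun x hx => absurd hx (Finset.notMem_empty x)⟩
        | @insert a S ha ih =>
          obtain ⟨T, hT, hST⟩ := ih (fun x hx => hsub (Finset.mem_insert_of_mem hx))
          obtain ⟨U, hU, y, hy, hay⟩ := hsub (Finset.mem_insert_self a S)
          obtain ⟨W, hW, hTW, hUW⟩ := hdir T hT U hU
          refine ⟨W, hW, fun x hx => ?_⟩
          rcases Finset.mem_insert.1 hx with rfl | hx
          · obtain ⟨z, hz, hyz⟩ := hUW y hy
            exact ⟨z, hz, hay.trans hyz⟩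
          · obtain ⟨y', hy', hxy'⟩ := hST x hx
            obtain ⟨z, hz, hy'z⟩ := hTW y' hy'
            exact ⟨z, hz, hxy'.trans hy'z⟩
  · rintro ⟨D, hD, rfl⟩
    refine ⟨⟨∅, by simp⟩, ?_, ?_⟩
    · intro S T hS hTS x hx
      obtain ⟨y, hy, hxy⟩ := hTS x hx
      exact hD (hS hy) hxy
    · intro S hS T hT
      refine ⟨S ∪ T, ?_, fun x hx => ⟨x, Finset.mem_union_left _ hx, le_refl x⟩,
        fun x hx => ⟨x, Finset.mem_union_right _ hx, le_refl x⟩⟩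
      intro x hx
      rcases Finset.mem_union.1 (by exact_mod_cast hx) with h | h
      · exact hS h
      · exact hT h
end

section
/- Let (X,≤) be a WQO and ≤' an extension of ≤ (i.e., ≤ ⊆ ≤'). Then the ideals of (X, ≤') are exactly the downward closures under ≤' of the ideals of (X, ≤). -/
def IsIdealRel {X : Type*} (r : X → X → Prop) (I : Set X) : Prop :=
  I.Nonempty ∧ (∀ ⦃x y : X⦄, x ∈ I → r y x → y ∈ I) ∧ DirectedOn r I

/-- In a wqo, the strict-subset relation on downward closed sets is well-founded. -/
lemma wqo_wf_downClosed {X : Type*} [Preorder X]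
    (hwqo : ∀ f : ℕ → X, ∃ i j : ℕ, i < j ∧ f i ≤ f j) :
    WellFounded (fun D E : {S : Set X // DownClosed S} => (D : Set X) ⊂ (E : Set X)) := by
  haveI : IsStrictOrder {S : Set X // DownClosed S} (fun D E => (D : Set X) ⊂ (E : Set X)) :=
    { irrefl := fun a h => h.ne rfl
      trans := fun _ _ _ h1 h2 => h1.trans h2 }
  by_contra h
  rw [RelEmbedding.wellFounded_iff_isEmpty, not_isEmpty_iff] at h
  obtain ⟨f⟩ := h
  have hdesc : ∀ n : ℕ, ((f (n + 1) : {S : Set X // DownClosed S}) : Set X) ⊂ (f n : Set X) :=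
    fun n => f.map_rel_iff.2 (Nat.lt_succ_self n)
  have hmono : ∀ m n : ℕ, m ≤ n → ((f n : {S : Set X // DownClosed S}) : Set X) ⊆ (f m : Set X) := by
    intro m n hmn
    induction n with
    | zero => simp_all
    | succ k ih =>
      rcases Nat.lt_or_ge m (k + 1) with hlt | hge
      · exact (hdesc k).subset.trans (ih (Nat.lt_succ_iff.mp hlt))
      · have : m = k + 1 := le_antisymm hmn hge
        subst this; exact subset_rfl
  have hx : ∀ n : ℕ, ∃ x : X, x ∈ (f n : Set X) ∧ x ∉ (f (n + 1) : Set X) := by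
    intro n
    obtain ⟨x, hx1, hx2⟩ := Set.exists_of_ssubset (hdesc n)
    exact ⟨x, hx1, hx2⟩
  choose g hg1 hg2 using hx
  obtain ⟨i, j, hij, hle⟩ := hwqo g
  have : g j ∈ (f (i + 1) : Set X) := hmono (i + 1) j hij (hg1 j)
  exact hg2 i ((f (i + 1)).2 this hle)

/-- In a wqo, every downward closed set is a finite union of ideals. -/
lemma wqo_decomp {X : Type*} [Preorder X]
    (hwqo : ∀ f : ℕ → X, ∃ i j : ℕ, i < j ∧ f i ≤ f j)
    (D : Set X) (hD : DownClosed D) :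
    ∃ S : Set (Set X), S.Finite ∧ (∀ I ∈ S, IsIdeal I) ∧ D = ⋃₀ S := by
  have main : ∀ E : {S : Set X // DownClosed S},
      ∃ S : Set (Set X), S.Finite ∧ (∀ I ∈ S, IsIdeal I) ∧ (E : Set X) = ⋃₀ S := by
    intro E
    induction E using (wqo_wf_downClosed hwqo).induction with
    | _ E ih =>
      rcases Set.eq_empty_or_nonempty (E : Set X) with hE | hEne
      · exact ⟨∅, Set.finite_empty, by simp, by simp [hE]⟩
      by_cases hdir : DirectedOn (· ≤ ·) (E : Set X)
      · exact ⟨{(E : Set X)}, Set.finite_singleton _,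
          by rintro I rfl; exact ⟨hEne, E.2, hdir⟩, by simp⟩
      · rw [DirectedOn] at hdir
        push_neg at hdir
        obtain ⟨a, ha, b, hb, hab⟩ := hdir
        set D₁ : Set X := {x ∈ (E : Set X) | ¬ a ≤ x} with hD₁def
        set D₂ : Set X := {x ∈ (E : Set X) | ¬ b ≤ x} with hD₂def
        have hdc₁ : DownClosed D₁ := by
          rintro x y ⟨hxE, hax⟩ hyx
          exact ⟨E.2 hxE hyx, fun hay => hax (hay.trans hyx)⟩
        have hdc₂ : DownClosed D₂ := by
          rintro x y ⟨hxE, hbx⟩ hyx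
          exact ⟨E.2 hxE hyx, fun hby => hbx (hby.trans hyx)⟩
        have hss₁ : D₁ ⊂ (E : Set X) :=
          (Set.ssubset_iff_of_subset (fun x hx => hx.1)).2 ⟨a, ha, fun h => h.2 le_rfl⟩
        have hss₂ : D₂ ⊂ (E : Set X) :=
          (Set.ssubset_iff_of_subset (fun x hx => hx.1)).2 ⟨b, hb, fun h => h.2 le_rfl⟩
        obtain ⟨S₁, hS₁f, hS₁i, hS₁u⟩ := ih ⟨D₁, hdc₁⟩ hss₁
        obtain ⟨S₂, hS₂f, hS₂i, hS₂u⟩ := ih ⟨D₂, hdc₂⟩ hss₂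
        refine ⟨S₁ ∪ S₂, hS₁f.union hS₂f, ?_, ?_⟩
        · rintro I (hI | hI)
          · exact hS₁i I hI
          · exact hS₂i I hI
        · rw [Set.sUnion_union, ← hS₁u, ← hS₂u]
          apply Set.eq_of_subset_of_subset
          · intro x hx
            by_cases hax : a ≤ x
            · by_cases hbx : b ≤ x
              · exact (hab x hx hax hbx).elim
              · exact Or.inr ⟨hx, hbx⟩
            · exact Or.inl ⟨hx, hax⟩
          · rintro x (hx | hx) <;> exact hx.1
  exact main ⟨D, hD⟩

/-- Finite subsets of a directed set have upper bounds (for a transitive relation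
extending the preorder). -/
lemma finite_upper_bound {X : Type*} [Preorder X] {le' : X → X → Prop}
    (htrans : ∀ ⦃x y z : X⦄, le' x y → le' y z → le' x z)
    (hext : ∀ ⦃x y : X⦄, x ≤ y → le' x y)
    {J : Set X} (hJne : J.Nonempty) (hdir : DirectedOn le' J)
    {W : Set X} (hW : W.Finite) (hWJ : W ⊆ J) :
    ∃ z ∈ J, ∀ w ∈ W, le' w z := by
  refine Set.Finite.induction_on
    (motive := fun W _ => W ⊆ J → ∃ z ∈ J, ∀ w ∈ W, le' w z) W hW ?_ ?_ hWJ
  · intro _; obtain ⟨z, hz⟩ := hJne; exact ⟨z, hz, by simp⟩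
  · intro a s _ _ ih hWJ'
    have haJ : a ∈ J := hWJ' (Set.mem_insert a s)
    obtain ⟨z, hzJ, hz⟩ := ih (fun x hx => hWJ' (Set.mem_insert_of_mem a hx))
    obtain ⟨z', hz'J, haz', hzz'⟩ := hdir a haJ z hzJ
    refine ⟨z', hz'J, ?_⟩
    rintro w (rfl | hw)
    · exact haz'
    · exact htrans (hz w hw) hzz'

theorem ideals_under_extension {X : Type*} [Preorder X]
    (hwqo : ∀ f : ℕ → X, ∃ i j : ℕ, i < j ∧ f i ≤ f j)
    (le' : X → X → Prop)
    (htrans : ∀ ⦃x y z : X⦄, le' x y → le' y z → le' x z)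
    (hext : ∀ ⦃x y : X⦄, x ≤ y → le' x y)
    (J : Set X) :
    IsIdealRel le' J ↔ ∃ I : Set X, IsIdeal I ∧ J = {y : X | ∃ x ∈ I, le' y x} := by
  constructor
  · rintro ⟨hJne, hJdc, hJdir⟩
    -- J is ≤-downward closed
    have hdc : DownClosed J := fun x y hx hle => hJdc hx (hext hle)
    obtain ⟨S, hSf, hSi, hSu⟩ := wqo_decomp hwqo J hdc
    -- find an ideal whose le'-closure covers J
    have key : ∃ I ∈ S, J ⊆ {y : X | ∃ x ∈ I, le' y x} := by
      by_contra hcon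
      push_neg at hcon
      simp only [Set.not_subset] at hcon
      choose w hwJ hw using hcon
      haveI : Finite ↥S := hSf.to_subtype
      set g : ↥S → X := fun I => w I.1 I.2 with hg
      have hWfin : (Set.range g).Finite := Set.finite_range g
      have hWJ : Set.range g ⊆ J := by rintro _ ⟨I, rfl⟩; exact hwJ I.1 I.2
      obtain ⟨z, hzJ, hz⟩ := finite_upper_bound htrans hext hJne hJdir hWfin hWJ
      rw [hSu] at hzJ
      obtain ⟨I, hIS, hzI⟩ := hzJ
      exact hw I hIS ⟨z, hzI, hz (g ⟨I, hIS⟩) (Set.mem_range_self _)⟩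
    obtain ⟨I, hIS, hsub⟩ := key
    refine ⟨I, hSi I hIS, Set.eq_of_subset_of_subset hsub ?_⟩
    rintro y ⟨x, hxI, hyx⟩
    have hxJ : x ∈ J := by rw [hSu]; exact ⟨I, hIS, hxI⟩
    exact hJdc hxJ hyx
  · rintro ⟨I, ⟨⟨x0, hx0⟩, hdc, hdir⟩, rfl⟩
    refine ⟨⟨x0, x0, hx0, hext le_rfl⟩, ?_, ?_⟩
    · rintro x y ⟨x', hx', hxx'⟩ hyx
      exact ⟨x', hx', htrans hyx hxx'⟩
    · rintro y1 ⟨x1, hx1, h1⟩ y2 ⟨x2, hx2, h2⟩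
      obtain ⟨x3, hx3, h13, h23⟩ := hdir x1 hx1 x2 hx2
      exact ⟨x3, ⟨x3, hx3, hext le_rfl⟩, htrans h1 (hext h13), htrans h2 (hext h23)⟩
end

section
/- Let (X,≤) be a WQO and E an equivalence relation on X compatible with ≤, meaning ≤∘E = E∘≤ as relations. Then ≤_E := ≤∘E is a quasi-order (reflexive and transitive), and for any two ideals I₁, I₂ of (X,≤): the E-closure of I₁ intersected with the E-closure of I₂ equals the E-closure of (I₁ ∩ E-closure(I₂)). -/
/-- Closure of a set under an equivalence relation `E`. -/
def Ecl {X : Type*} (E : X → X → Prop) (S : Set X) : Set X :=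
  {y | ∃ x ∈ S, E x y}

theorem quotient_qo_and_ideal_intersections {X : Type*} [Preorder X]
    (hwqo : ∀ f : ℕ → X, ∃ i j : ℕ, i < j ∧ f i ≤ f j)
    (E : X → X → Prop) (hE : Equivalence E)
    (hcomp : ∀ x z : X, (∃ y, x ≤ y ∧ E y z) ↔ (∃ y, E x y ∧ y ≤ z)) :
    (∀ x : X, ∃ y, x ≤ y ∧ E y x) ∧
    (∀ x₁ x₂ x₃ : X, (∃ y, x₁ ≤ y ∧ E y x₂) → (∃ y, x₂ ≤ y ∧ E y x₃) →
      (∃ y, x₁ ≤ y ∧ E y x₃)) ∧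
    (∀ I₁ I₂ : Set X, IsIdeal I₁ → IsIdeal I₂ →
      Ecl E I₁ ∩ Ecl E I₂ = Ecl E (I₁ ∩ Ecl E I₂)) := by
  refine ⟨fun x => ⟨x, le_refl x, hE.refl x⟩, ?_, ?_⟩
  · rintro x₁ x₂ x₃ ⟨y, hxy, hEy⟩ ⟨z, hxz, hEz⟩
    obtain ⟨w, hyw, hEw⟩ := (hcomp y z).mpr ⟨x₂, hEy, hxz⟩
    exact ⟨w, hxy.trans hyw, hE.trans hEw hEz⟩
  · intro I₁ I₂ _ _
    ext y
    constructor
    · rintro ⟨⟨a, haI, hay⟩, ⟨b, hbI, hby⟩⟩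
      exact ⟨a, ⟨haI, b, hbI, hE.trans hby (hE.symm hay)⟩, hay⟩
    · rintro ⟨a, ⟨haI, b, hbI, hba⟩, hay⟩
      exact ⟨⟨a, haI, hay⟩, b, hbI, hE.trans hba hay⟩
end

section
/- Let X be a WQO and Y ⊆ X. An ideal I of X satisfies I = ↓_X(I ∩ Y) if and only if there exists a directed subset Δ ⊆ Y with I = ↓_X Δ. -/
def dcl {X : Type*} [Preorder X] (S : Set X) : Set X :=
  {y | ∃ x ∈ S, y ≤ x}

theorem adherence_characterizations {X : Type*} [Preorder X]
    (hwqo : ∀ f : ℕ → X, ∃ i j : ℕ, i < j ∧ f i ≤ f j)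
    (Y : Set X) (I : Set X) (hI : IsIdeal I) :
    I = dcl (I ∩ Y) ↔ ∃ Δ : Set X, Δ ⊆ Y ∧ DirectedOn (· ≤ ·) Δ ∧ I = dcl Δ := by
  constructor
  · intro h
    refine ⟨I ∩ Y, Set.inter_subset_right, ?_, h⟩
    rintro a ⟨haI, haY⟩ b ⟨hbI, hbY⟩
    obtain ⟨c, hcI, hac, hbc⟩ := hI.2.2 a haI b hbI
    have : c ∈ dcl (I ∩ Y) := h ▸ hcI
    obtain ⟨d, hd, hcd⟩ := this
    exact ⟨d, hd, hac.trans hcd, hbc.trans hcd⟩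
  · rintro ⟨Δ, hΔY, hdir, rfl⟩
    ext x
    constructor
    · rintro ⟨d, hd, hxd⟩
      exact ⟨d, ⟨⟨d, hd, le_refl d⟩, hΔY hd⟩, hxd⟩
    · rintro ⟨d, ⟨⟨e, he, hde⟩, _⟩, hxd⟩
      exact ⟨e, he, hxd.trans hde⟩
end
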